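/- The Minkowski product of the closed disk D = {z ∈ ℂ : |z − 1/2| ≤ 1/2} with itself equals the cardioid region {r e^{iφ} : −π < φ ≤ π, 0 ≤ r ≤ cos²(φ/2)}. In particular D·D is strictly contained in the disk {z : |z − 1/3| ≤ 2/3}. -/

import Mathlib

def srgDisk : Set ℂ := {z : ℂ | ‖z - 1 / 2‖ ≤ 1 / 2}

lemma mem_srgDisk_iff (z : ℂ) : z ∈ srgDisk ↔ (‖z‖) ^ 2 ≤ z.re := by
  have h : ∀ w : ℂ, ‖w‖ ≤ 1/2 ↔ (‖w‖)^2 ≤ 1/4 := by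
    intro w
    constructor
    · intro h; nlinarith [norm_nonneg w]
    · intro h; nlinarith [norm_nonneg w]
  rw [srgDisk, Set.mem_setOf_eq, h, Complex.sq_norm, Complex.sq_norm, Complex.normSq_apply,
    Complex.normSq_apply]
  simp [Complex.sub_re, Complex.sub_im]
  constructor <;> intro <;> nlinarith

lemma key (z₁ z₂ : ℂ) (h1 : (‖z₁‖)^2 ≤ z₁.re) (h2 : (‖z₂‖)^2 ≤ z₂.re) :
    2 * (‖z₁ * z₂‖)^2 ≤ ‖z₁ * z₂‖ + (z₁ * z₂).re := by
  set a := ‖z₁‖ with ha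
  set b := ‖z₂‖ with hb
  have ha2 : a^2 = z₁.re^2 + z₁.im^2 := by rw [ha, Complex.sq_norm, Complex.normSq_apply]; ring
  have hb2 : b^2 = z₂.re^2 + z₂.im^2 := by rw [hb, Complex.sq_norm, Complex.normSq_apply]; ring
  have ha0 : 0 ≤ a := norm_nonneg _
  have hb0 : 0 ≤ b := norm_nonneg _
  rw [norm_mul, Complex.mul_re]
  have hcs : z₁.re * z₂.re + z₁.im * z₂.im ≤ a * b := by
    nlinarith [sq_nonneg (z₁.re * z₂.im - z₂.re * z₁.im), sq_nonneg (a*b - z₁.re*z₂.re - z₁.im*z₂.im), mul_nonneg ha0 hb0]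
  have hx : a^2 * b^2 ≤ z₁.re * z₂.re := by
    have h1' : 0 ≤ z₁.re := le_trans (sq_nonneg a) h1
    nlinarith [sq_nonneg b]
  nlinarith

lemma key' (z : ℂ) (hz : z ∈ Set.image2 (· * ·) srgDisk srgDisk) :
    2 * (‖z‖)^2 ≤ ‖z‖ + z.re := by
  obtain ⟨z₁, hz₁, z₂, hz₂, rfl⟩ := hz
  exact key z₁ z₂ ((mem_srgDisk_iff z₁).1 hz₁) ((mem_srgDisk_iff z₂).1 hz₂)

theorem srg_stmt16 :
    Set.image2 (· * ·) srgDisk srgDisk =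
      {c : ℂ | ∃ r φ : ℝ, -Real.pi < φ ∧ φ ≤ Real.pi ∧ 0 ≤ r ∧
        r ≤ (Real.cos (φ / 2)) ^ 2 ∧ c = (r : ℂ) * Complex.exp (φ * Complex.I)} ∧
    Set.image2 (· * ·) srgDisk srgDisk ⊂
      {z : ℂ | ‖z - 1 / 3‖ ≤ 2 / 3} := by
  have hsub : Set.image2 (· * ·) srgDisk srgDisk ⊆
      {z : ℂ | ‖z - 1 / 3‖ ≤ 2 / 3} := by
    intro z hz
    have hk := key' z hz
    have h0 : 0 ≤ ‖z‖ := norm_nonneg z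
    show ‖z - 1/3‖ ≤ 2/3
    have h : ∀ w : ℂ, (‖w‖)^2 ≤ 4/9 → ‖w‖ ≤ 2/3 := by
      intro w hw; nlinarith [norm_nonneg w]
    apply h
    rw [Complex.sq_norm, Complex.normSq_apply]
    simp only [Complex.sub_re, Complex.sub_im]
    have habs : (‖z‖)^2 = z.re^2 + z.im^2 := by
      rw [Complex.sq_norm, Complex.normSq_apply]; ring
    norm_num
    nlinarith [sq_nonneg (‖z‖ - 1)]
  constructor
  · ext z
    constructor
    · intro hz
      by_cases h0 : z = 0
      · exact ⟨0, 0, by linarith [Real.pi_pos], Real.pi_pos.le, le_refl 0, by positivity, by simp [h0]⟩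
      · have hk := key' z hz
        have hr : 0 < ‖z‖ := norm_pos_iff.mpr h0
        refine ⟨‖z‖, Complex.arg z, Complex.neg_pi_lt_arg z, Complex.arg_le_pi z,
          hr.le, ?_, ?_⟩
        · rw [Real.cos_sq, show 2*(z.arg/2) = z.arg by ring, Complex.cos_arg h0]
          have h2 : z.re / ‖z‖ * ‖z‖ = z.re := div_mul_cancel₀ _ hr.ne'
          nlinarith [h2, hk, hr]
        · exact (Complex.norm_mul_exp_arg_mul_I z).symm
    · rintro ⟨r, φ, hφ1, hφ2, hr0, hr, rfl⟩
      set w : ℂ := (Real.sqrt r : ℂ) * Complex.exp (↑(φ/2) * Complex.I) with hw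
      have hcos : 0 ≤ Real.cos (φ/2) := by
        apply Real.cos_nonneg_of_mem_Icc
        constructor <;> [linarith [Real.pi_pos]; linarith]
      have hsq : Real.sqrt r ≤ Real.cos (φ/2) := by
        have := Real.sqrt_le_sqrt hr
        rwa [Real.sqrt_sq hcos] at this
      have hwD : w ∈ srgDisk := by
        rw [mem_srgDisk_iff]
        have habs : ‖w‖ = Real.sqrt r := by
          rw [hw, norm_mul, Complex.norm_exp_ofReal_mul_I, Complex.norm_real, Real.norm_eq_abs,
            abs_of_nonneg (Real.sqrt_nonneg r), mul_one]
        have hre : w.re = Real.sqrt r * Real.cos (φ/2) := by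
          rw [hw, Complex.mul_re, Complex.ofReal_re, Complex.ofReal_im,
            Complex.exp_ofReal_mul_I_re]
          ring
        rw [habs, hre, Real.sq_sqrt hr0]
        calc r = Real.sqrt r * Real.sqrt r := (Real.mul_self_sqrt hr0).symm
        _ ≤ Real.sqrt r * Real.cos (φ/2) := by
            apply mul_le_mul_of_nonneg_left hsq (Real.sqrt_nonneg r)
      refine ⟨w, hwD, w, hwD, ?_⟩
      show w * w = _
      rw [hw]
      have : Complex.exp (↑(φ/2) * Complex.I) * Complex.exp (↑(φ/2) * Complex.I)
          = Complex.exp (↑φ * Complex.I) := by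
        rw [← Complex.exp_add]
        congr 1
        push_cast
        ring
      calc (Real.sqrt r : ℂ) * _ * ((Real.sqrt r : ℂ) * _)
          = ((Real.sqrt r : ℂ) * (Real.sqrt r : ℂ)) *
            (Complex.exp (↑(φ/2) * Complex.I) * Complex.exp (↑(φ/2) * Complex.I)) := by ring
        _ = (r : ℂ) * Complex.exp (↑φ * Complex.I) := by
            rw [this, ← Complex.ofReal_mul, Real.mul_self_sqrt hr0]
  · refine ⟨hsub, fun hcon => ?_⟩
    have hmem : (1/3 + (2/3) * Complex.I : ℂ) ∈ {z : ℂ | ‖z - 1 / 3‖ ≤ 2 / 3} := by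
      simp only [Set.mem_setOf_eq]
      have : (1/3 + (2/3) * Complex.I - 1/3 : ℂ) = (2/3) * Complex.I := by ring
      rw [this, norm_mul, Complex.norm_I, mul_one]
      rw [show ((2:ℂ)/3) = ((2/3 : ℝ) : ℂ) by norm_num, Complex.norm_real, Real.norm_eq_abs]
      rw [abs_of_nonneg (by norm_num : (0:ℝ) ≤ 2/3)]
    have hk := key' _ (hcon hmem)
    have habs : ‖(1/3 + (2/3) * Complex.I : ℂ)‖ = Real.sqrt 5 / 3 := by
      rw [Complex.norm_def, Complex.normSq_apply]
      simp only [Complex.add_re, Complex.add_im, Complex.mul_re, Complex.mul_im,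
        Complex.I_re, Complex.I_im, Complex.one_re, Complex.one_im, Complex.div_re,
        Complex.div_im]
      norm_num
    have hre : (1/3 + (2/3) * Complex.I : ℂ).re = 1/3 := by simp
    rw [habs, hre] at hk
    have h5 : Real.sqrt 5 < 7/3 := by
      have : Real.sqrt 5 < Real.sqrt (49/9) := by
        apply Real.sqrt_lt_sqrt <;> norm_num
      rwa [show (49/9 : ℝ) = (7/3)^2 by norm_num, Real.sqrt_sq (by norm_num)] at this
    nlinarith [Real.sq_sqrt (by norm_num : (5:ℝ) ≥ 0)]
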